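/- Fix positive integers m, n, ℓ and a partition μ with at most m parts and μ_1 ≤ ℓ. On the set 𝒦 = ⨆_{η ⊂ μ} SST_𝔸((ℓ^m)/η) × SST_𝔹(μ/η) × X (X any set), define operators ẽ₀, f̃₀ as follows: for (P,Q,V) ∈ 𝒦, for each k ≥ 1 let a_k, b_k be the topmost entries of the k-th columns (from the right) of P and Q; set σ_k = + if the k-th column of P does not reach the top row used by the minimal even letter, σ_k = − if a_k is the minimal even letter and b_k is the minimal odd letter, σ_k = · otherwise; let k₀ be minimal with σ_{k₀} ≠ ·; if σ_{k₀} = + then f̃₀ adds the minimal even letter atop column k₀ of P and the minimal odd letter atop column k₀ of Q (and ẽ₀ = 0); if σ_{k₀} = − then ẽ₀ removes these two boxes (and f̃₀ = 0); if all σ_k = · then both are 0. Then ẽ₀ and f̃₀ map 𝒦 into 𝒦 ∪ {0} and are mutually inverse where defined: f̃₀(x) = y ⟺ ẽ₀(y) = x. -/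

import Mathlib

section Skew

variable {α : Type*} [LinearOrder α]

/-- A semistandard skew tableau with entries in a totally ordered *even* alphabet:
rows weakly increase, columns strictly increase. The shape has rows `i : Fin m` and cells
`lo i ≤ j < hi i`; the filling is normalized to `junk` outside the shape. -/
def EvenSkew (m : ℕ) (lo hi : Fin m → ℕ) (junk : α) (T : Fin m → ℕ → α) : Prop :=
  (∀ (i : Fin m) (j : ℕ), lo i ≤ j → j + 1 < hi i → T i j ≤ T i (j + 1)) ∧
  (∀ (i : Fin m) (h : (i : ℕ) + 1 < m) (j : ℕ),
      lo i ≤ j → j < hi ⟨(i : ℕ) + 1, h⟩ → T i j < T ⟨(i : ℕ) + 1, h⟩ j) ∧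
  (∀ (i : Fin m) (j : ℕ), (j < lo i ∨ hi i ≤ j) → T i j = junk)

/-- A semistandard skew tableau with entries in a totally ordered *odd* alphabet:
rows strictly increase, columns weakly increase. -/
def OddSkew (m : ℕ) (lo hi : Fin m → ℕ) (junk : α) (T : Fin m → ℕ → α) : Prop :=
  (∀ (i : Fin m) (j : ℕ), lo i ≤ j → j + 1 < hi i → T i j < T i (j + 1)) ∧
  (∀ (i : Fin m) (h : (i : ℕ) + 1 < m) (j : ℕ),
      lo i ≤ j → j < hi ⟨(i : ℕ) + 1, h⟩ → T i j ≤ T ⟨(i : ℕ) + 1, h⟩ j) ∧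
  (∀ (i : Fin m) (j : ℕ), (j < lo i ∨ hi i ≤ j) → T i j = junk)

end Skew

variable (m n ℓ : ℕ) [NeZero m] [NeZero n]

/-- An element of `𝒦 = ⨆_{η ⊆ μ} SST_𝔸((ℓ^m)/η) × SST_𝔹(μ/η) × X`: a partition `η ⊆ μ`, a
pair of semistandard tableaux `P ∈ SST_𝔸((ℓ^m)/η)` and `Q ∈ SST_𝔹(μ/η)` (with the even
`m`-letter alphabet `Fin m` and the odd `n`-letter alphabet `Fin n`), and `V ∈ X`. -/
structure KElt (μ : Fin m → ℕ) (X : Type*) where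
  eta : Fin m → ℕ
  eta_anti : ∀ i j : Fin m, i ≤ j → eta j ≤ eta i
  eta_le : ∀ i, eta i ≤ μ i
  P : Fin m → ℕ → Fin m
  Q : Fin m → ℕ → Fin n
  hP : EvenSkew m eta (fun _ => ℓ) 0 P
  hQ : OddSkew m eta μ 0 Q
  v : X

variable {μ : Fin m → ℕ} {X : Type*}

/-- The top row of the column `c` of the skew shape `(ℓ^m)/η` (if that column is
nonempty). -/
def topRow? (eta : Fin m → ℕ) (c : ℕ) : Option (Fin m) :=
  if h : (Finset.univ.filter fun i : Fin m => eta i ≤ c).Nonempty then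
    some ((Finset.univ.filter fun i : Fin m => eta i ≤ c).min' h)
  else none

/-- `σ_c = +` : the column `c` of `P` is empty, or its top entry exceeds the minimal even
letter. -/
def plusAt (x : KElt m n ℓ μ X) (c : ℕ) : Prop :=
  topRow? m x.eta c = none ∨
    ∃ i0 : Fin m, topRow? m x.eta c = some i0 ∧ (0 : Fin m) < x.P i0 c

/-- `σ_c = −` : the top entry of column `c` of `P` is the minimal even letter and the top
entry of column `c` of `Q` is the minimal odd letter. -/
def minusAt (x : KElt m n ℓ μ X) (c : ℕ) : Prop :=
  ∃ i0 : Fin m, topRow? m x.eta c = some i0 ∧ x.P i0 c = 0 ∧ c < μ i0 ∧ x.Q i0 c = 0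

/-- `σ_c = ·` : neither of the above. -/
def dotAt (x : KElt m n ℓ μ X) (c : ℕ) : Prop :=
  ¬ plusAt m n ℓ x c ∧ ¬ minusAt m n ℓ x c

/-- The relation `f̃₀ x = y`: scanning the columns from the right, at the first column `c`
with `σ_c ≠ ·` we have `σ_c = +`, and `y` is obtained from `x` by adding a box containing
the minimal even letter atop column `c` of `P` and a box containing the minimal odd letter
atop column `c` of `Q` (i.e. removing the corner cell `(r, c)` from `η`). -/
def FRel (x y : KElt m n ℓ μ X) : Prop :=
  y.v = x.v ∧
  ∃ c, c < ℓ ∧ plusAt m n ℓ x c ∧ (∀ c', c < c' → c' < ℓ → dotAt m n ℓ x c') ∧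
    ∃ r : Fin m, x.eta r = c + 1 ∧ y.eta = Function.update x.eta r c ∧
      y.P r c = 0 ∧ (∀ (i : Fin m) (j : ℕ), ¬(i = r ∧ j = c) → y.P i j = x.P i j) ∧
      y.Q r c = 0 ∧ (∀ (i : Fin m) (j : ℕ), ¬(i = r ∧ j = c) → y.Q i j = x.Q i j)

/-- The relation `ẽ₀ x = y`: scanning the columns from the right, at the first column `c`
with `σ_c ≠ ·` we have `σ_c = −`, and `y` is obtained from `x` by removing the two top
boxes (containing the minimal even and odd letters) of column `c` of `P` and of `Q`. -/
def ERel (x y : KElt m n ℓ μ X) : Prop :=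
  y.v = x.v ∧
  ∃ c, c < ℓ ∧ minusAt m n ℓ x c ∧ (∀ c', c < c' → c' < ℓ → dotAt m n ℓ x c') ∧
    ∃ r : Fin m, topRow? m x.eta c = some r ∧ x.eta r = c ∧
      x.P r c = 0 ∧ x.Q r c = 0 ∧ y.eta = Function.update x.eta r (c + 1) ∧
      (∀ (i : Fin m) (j : ℕ), ¬(i = r ∧ j = c) → y.P i j = x.P i j) ∧
      (∀ (i : Fin m) (j : ℕ), ¬(i = r ∧ j = c) → y.Q i j = x.Q i j)

set_option linter.unusedSectionVars false

section Proofs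

variable {m n ℓ : ℕ} [NeZero m] [NeZero n] {μ : Fin m → ℕ} {X : Type*}

lemma topRow_none_iff {eta : Fin m → ℕ} {c : ℕ} :
    topRow? m eta c = none ↔ ∀ i, c < eta i := by
  unfold topRow?
  split_ifs with h
  · simp only [reduceCtorEq, false_iff]
    push_neg
    obtain ⟨i, hi⟩ := h
    simp only [Finset.mem_filter] at hi
    exact ⟨i, hi.2⟩
  · simp only [true_iff]
    intro i
    by_contra hle
    exact h ⟨i, Finset.mem_filter.2 ⟨Finset.mem_univ i, not_lt.1 hle⟩⟩

lemma topRow_some_iff {eta : Fin m → ℕ} {c : ℕ} {i0 : Fin m} :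
    topRow? m eta c = some i0 ↔ eta i0 ≤ c ∧ ∀ i, eta i ≤ c → i0 ≤ i := by
  set S := Finset.univ.filter fun i : Fin m => eta i ≤ c with hS
  have hmem : ∀ i : Fin m, i ∈ S ↔ eta i ≤ c := by
    intro i; rw [hS]; simp
  unfold topRow?
  rw [← hS]
  split_ifs with h
  · constructor
    · intro hs
      have hs' : (Finset.univ.filter fun i : Fin m => eta i ≤ c).min' h = i0 :=
        Option.some.inj hs
      constructor
      · have hm := Finset.min'_mem _ h
        rw [hs'] at hm
        exact (Finset.mem_filter.1 hm).2
      · intro i hi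
        have := Finset.min'_le S i ((hmem i).2 hi)
        rwa [hs'] at this
    · rintro ⟨h1, h2⟩
      congr 1
      apply le_antisymm
      · exact Finset.min'_le S i0 ((hmem i0).2 h1)
      · exact h2 _ ((hmem _).1 (Finset.min'_mem S h))
  · constructor
    · intro hs; exact absurd hs (by simp)
    · rintro ⟨h1, _⟩
      exact absurd ⟨i0, (hmem i0).2 h1⟩ h

lemma topRow_spec {eta : Fin m → ℕ} {c : ℕ} {i : Fin m} (hi : eta i ≤ c) :
    ∃ i0, topRow? m eta c = some i0 ∧ eta i0 ≤ c ∧ ∀ i', eta i' ≤ c → i0 ≤ i' := by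
  have hne : ∃ i0, topRow? m eta c = some i0 := by
    cases htr : topRow? m eta c with
    | none => exact absurd hi (not_le.2 (topRow_none_iff.1 htr i))
    | some i0 => exact ⟨i0, rfl⟩
  obtain ⟨i0, h0⟩ := hne
  obtain ⟨h1, h2⟩ := topRow_some_iff.1 h0
  exact ⟨i0, h0, h1, h2⟩

lemma KElt.ext' {x y : KElt m n ℓ μ X} (he : x.eta = y.eta) (hp : x.P = y.P)
    (hq : x.Q = y.Q) (hv : x.v = y.v) : x = y := by
  cases x; cases y
  simp only at he hp hq hv
  subst he; subst hp; subst hq; subst hv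
  rfl

lemma plusAt_congr {x y : KElt m n ℓ μ X} {c : ℕ}
    (ht : topRow? m x.eta c = topRow? m y.eta c)
    (hp : ∀ i, x.P i c = y.P i c) :
    plusAt m n ℓ x c ↔ plusAt m n ℓ y c := by
  unfold plusAt
  rw [ht]
  constructor <;> rintro (h | ⟨i0, hs, hpos⟩)
  · exact Or.inl h
  · exact Or.inr ⟨i0, hs, by rw [← hp i0]; exact hpos⟩
  · exact Or.inl h
  · exact Or.inr ⟨i0, hs, by rw [hp i0]; exact hpos⟩

lemma minusAt_congr {x y : KElt m n ℓ μ X} {c : ℕ}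
    (ht : topRow? m x.eta c = topRow? m y.eta c)
    (hp : ∀ i, x.P i c = y.P i c) (hq : ∀ i, x.Q i c = y.Q i c) :
    minusAt m n ℓ x c ↔ minusAt m n ℓ y c := by
  unfold minusAt
  rw [ht]
  constructor <;> rintro ⟨i0, hs, h1, h2, h3⟩
  · exact ⟨i0, hs, by rw [← hp i0]; exact h1, h2, by rw [← hq i0]; exact h3⟩
  · exact ⟨i0, hs, by rw [hp i0]; exact h1, h2, by rw [hq i0]; exact h3⟩

lemma dotAt_congr {x y : KElt m n ℓ μ X} {c : ℕ}
    (ht : topRow? m x.eta c = topRow? m y.eta c)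
    (hp : ∀ i, x.P i c = y.P i c) (hq : ∀ i, x.Q i c = y.Q i c) :
    dotAt m n ℓ x c → dotAt m n ℓ y c := by
  intro ⟨h1, h2⟩
  exact ⟨fun h => h1 ((plusAt_congr ht hp).2 h),
    fun h => h2 ((minusAt_congr ht hp hq).2 h)⟩

lemma fStep (x : KElt m n ℓ μ X) (c : ℕ) (hc : c < ℓ) (r : Fin m)
    (hr : x.eta r = c + 1) (hmax : ∀ i : Fin m, r < i → x.eta i ≤ c)
    (hnext : ∀ h : (r : ℕ) + 1 < m, x.P ⟨(r : ℕ) + 1, h⟩ c ≠ 0)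
    (hqnext : c + 1 < μ r → x.Q r (c + 1) ≠ 0) :
    ∃ y : KElt m n ℓ μ X,
      y.eta = Function.update x.eta r c ∧
      y.P = (fun i j => if i = r ∧ j = c then 0 else x.P i j) ∧
      y.Q = (fun i j => if i = r ∧ j = c then 0 else x.Q i j) ∧ y.v = x.v := by
  set eta' : Fin m → ℕ := Function.update x.eta r c with heta'
  set P' : Fin m → ℕ → Fin m := fun i j => if i = r ∧ j = c then 0 else x.P i j with hP'
  set Q' : Fin m → ℕ → Fin n := fun i j => if i = r ∧ j = c then 0 else x.Q i j with hQ'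
  have hloeq : ∀ i : Fin m, i ≠ r → eta' i = x.eta i := by
    intro i hi; rw [heta', Function.update_of_ne hi]
  have hlor : eta' r = c := by rw [heta', Function.update_self]
  have hPe : ∀ (i : Fin m) (j : ℕ), ¬(i = r ∧ j = c) → P' i j = x.P i j := by
    intro i j h; rw [hP']; exact if_neg h
  have hQe : ∀ (i : Fin m) (j : ℕ), ¬(i = r ∧ j = c) → Q' i j = x.Q i j := by
    intro i j h; rw [hQ']; exact if_neg h
  have hPrc : P' r c = 0 := by rw [hP']; exact if_pos ⟨rfl, rfl⟩
  have hQrc : Q' r c = 0 := by rw [hQ']; exact if_pos ⟨rfl, rfl⟩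
  have hanti : ∀ i j : Fin m, i ≤ j → eta' j ≤ eta' i := by
    intro i j hij
    rcases eq_or_ne i r with rfl | hi
    · rcases eq_or_ne j i with rfl | hj
      · exact le_refl _
      · rw [hloeq j hj, hlor]
        exact hmax j (lt_of_le_of_ne hij (Ne.symm hj))
    · rcases eq_or_ne j r with rfl | hj
      · rw [hloeq i hi, hlor]
        have := x.eta_anti i j hij
        omega
      · rw [hloeq i hi, hloeq j hj]
        exact x.eta_anti i j hij
  have hle : ∀ i, eta' i ≤ μ i := by
    intro i
    rcases eq_or_ne i r with rfl | hi
    · rw [hlor]; have := x.eta_le i; omega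
    · rw [hloeq i hi]; exact x.eta_le i
  have hEP : EvenSkew m eta' (fun _ => ℓ) 0 P' := by
    refine ⟨?_, ?_, ?_⟩
    · -- rows weakly increase
      intro i j hlo hj1
      rcases eq_or_ne i r with rfl | hi
      · rw [hlor] at hlo
        rcases eq_or_ne j c with rfl | hjc
        · rw [hPrc]; exact Fin.zero_le _
        · have hj : c + 1 ≤ j := by omega
          rw [hPe i j (fun h => hjc h.2), hPe i (j+1) (fun h => by omega)]
          exact x.hP.1 i j (by omega) hj1
      · rw [hPe i j (fun h => hi h.1), hPe i (j+1) (fun h => hi h.1)]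
        rw [hloeq i hi] at hlo
        exact x.hP.1 i j hlo hj1
    · -- columns strictly increase
      intro i h j hlo hj
      rcases eq_or_ne i r with rfl | hi
      · rw [hlor] at hlo
        have hi1 : (⟨(i : ℕ) + 1, h⟩ : Fin m) ≠ i := by
          intro hh; have := congrArg Fin.val hh; simp at this
        rcases eq_or_ne j c with rfl | hjc
        · rw [hPrc, hPe _ j (fun hh => hi1 hh.1)]
          exact lt_of_le_of_ne (Fin.zero_le _) (Ne.symm (hnext h))
        · rw [hPe i j (fun hh => hjc hh.2), hPe _ j (fun hh => hjc hh.2)]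
          exact x.hP.2.1 i h j (by omega) hj
      · by_cases hcase : (⟨(i : ℕ) + 1, h⟩ : Fin m) = r ∧ j = c
        · exfalso
          obtain ⟨h1, rfl⟩ := hcase
          rw [hloeq i hi] at hlo
          have hir : i ≤ r := by
            rw [Fin.le_def]
            have := congrArg Fin.val h1; simp at this; omega
          have := x.eta_anti i r hir
          omega
        · rw [hPe i j (fun hh => hi hh.1), hPe _ j hcase]
          rw [hloeq i hi] at hlo
          exact x.hP.2.1 i h j hlo hj
    · -- junk
      intro i j hj
      by_cases hcase : i = r ∧ j = c
      · obtain ⟨rfl, rfl⟩ := hcase; exact hPrc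
      · rw [hPe i j hcase]
        apply x.hP.2.2
        rcases hj with hj | hj
        · left
          rcases eq_or_ne i r with rfl | hi
          · rw [hlor] at hj; omega
          · rwa [hloeq i hi] at hj
        · right; exact hj
  have hEQ : OddSkew m eta' μ 0 Q' := by
    refine ⟨?_, ?_, ?_⟩
    · -- rows strictly increase
      intro i j hlo hj1
      rcases eq_or_ne i r with rfl | hi
      · rw [hlor] at hlo
        rcases eq_or_ne j c with rfl | hjc
        · rw [hQrc, hQe i (j+1) (fun hh => by omega)]
          exact lt_of_le_of_ne (Fin.zero_le _) (Ne.symm (hqnext hj1))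
        · rw [hQe i j (fun hh => hjc hh.2), hQe i (j+1) (fun hh => by omega)]
          exact x.hQ.1 i j (by omega) hj1
      · rw [hQe i j (fun hh => hi hh.1), hQe i (j+1) (fun hh => hi hh.1)]
        rw [hloeq i hi] at hlo
        exact x.hQ.1 i j hlo hj1
    · -- columns weakly increase
      intro i h j hlo hj
      rcases eq_or_ne i r with rfl | hi
      · rcases eq_or_ne j c with rfl | hjc
        · rw [hQrc]; exact Fin.zero_le _
        · rw [hlor] at hlo
          rw [hQe i j (fun hh => hjc hh.2), hQe _ j (fun hh => hjc hh.2)]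
          exact x.hQ.2.1 i h j (by omega) hj
      · by_cases hcase : (⟨(i : ℕ) + 1, h⟩ : Fin m) = r ∧ j = c
        · exfalso
          obtain ⟨h1, rfl⟩ := hcase
          rw [hloeq i hi] at hlo
          have hir : i ≤ r := by
            rw [Fin.le_def]
            have := congrArg Fin.val h1; simp at this; omega
          have := x.eta_anti i r hir
          omega
        · rw [hQe i j (fun hh => hi hh.1), hQe _ j hcase]
          rw [hloeq i hi] at hlo
          exact x.hQ.2.1 i h j hlo hj
    · -- junk
      intro i j hj
      by_cases hcase : i = r ∧ j = c
      · obtain ⟨rfl, rfl⟩ := hcase; exact hQrc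
      · rw [hQe i j hcase]
        apply x.hQ.2.2
        rcases hj with hj | hj
        · left
          rcases eq_or_ne i r with rfl | hi
          · rw [hlor] at hj; omega
          · rwa [hloeq i hi] at hj
        · right; exact hj
  exact ⟨⟨eta', hanti, hle, P', Q', hEP, hEQ, x.v⟩, rfl, rfl, rfl, rfl⟩
lemma exists_corner (hμl : ∀ i, μ i ≤ ℓ) (x : KElt m n ℓ μ X) (c : ℕ) (hc : c < ℓ)
    (hplus : plusAt m n ℓ x c) (hdots : ∀ c', c < c' → c' < ℓ → dotAt m n ℓ x c') :
    ∃ r : Fin m, x.eta r = c + 1 ∧ (∀ i, r < i → x.eta i ≤ c) ∧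
      ∀ h : (r : ℕ) + 1 < m, x.P ⟨(r : ℕ) + 1, h⟩ c ≠ 0 := by
  have hm : 0 < m := Nat.pos_of_ne_zero (NeZero.ne m)
  rcases hplus with hnone | ⟨i0, htop, hpos⟩
  · -- column c empty
    rw [topRow_none_iff] at hnone
    set last : Fin m := ⟨m - 1, by omega⟩ with hlast
    have h1 : c + 1 ≤ x.eta last := hnone last
    have h2 : x.eta last ≤ c + 1 := by
      by_contra hgt
      push_neg at hgt
      rcases lt_or_ge (c + 1) ℓ with hcl | hcl
      · refine (hdots (c + 1) (by omega) hcl).1 (Or.inl ?_)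
        rw [topRow_none_iff]
        intro i
        have hile : i ≤ last := by rw [Fin.le_def]; simp [hlast]; omega
        have := x.eta_anti i last hile
        omega
      · have := x.eta_le last
        have := hμl last
        omega
    refine ⟨last, by omega, ?_, ?_⟩
    · intro i hi
      exfalso
      rw [Fin.lt_def] at hi
      have := i.isLt
      simp [hlast] at hi
      omega
    · intro h
      exfalso
      simp [hlast] at h
      omega
  · obtain ⟨h0, hmin⟩ := topRow_some_iff.1 htop
    -- chain bound: the value of P at the top of column c is at most i0
    have chain : ∀ k (hk : (i0 : ℕ) + k < m),
        (x.P i0 c : ℕ) + k ≤ (x.P ⟨(i0 : ℕ) + k, hk⟩ c : ℕ) := by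
      intro k
      induction k with
      | zero =>
        intro hk
        have he : (⟨(i0 : ℕ) + 0, hk⟩ : Fin m) = i0 := by ext; simp
        rw [he]; omega
      | succ k ih =>
        intro hk
        have hk' : (i0 : ℕ) + k < m := by omega
        have h1 := ih hk'
        have hek : x.eta (⟨(i0 : ℕ) + k, hk'⟩ : Fin m) ≤ c := by
          refine le_trans (x.eta_anti i0 _ ?_) h0
          rw [Fin.le_def]; simp
        have hstep := x.hP.2.1 ⟨(i0 : ℕ) + k, hk'⟩ (by simp; omega) c hek hc
        have he : (⟨((⟨(i0 : ℕ) + k, hk'⟩ : Fin m) : ℕ) + 1, by simp; omega⟩ : Fin m)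
            = ⟨(i0 : ℕ) + (k + 1), hk⟩ := by ext; simp; omega
        rw [he] at hstep
        have := Fin.lt_def.1 hstep
        omega
    have hub : (x.P i0 c : ℕ) ≤ (i0 : ℕ) := by
      have hi0m : (i0 : ℕ) < m := i0.isLt
      have hk : (i0 : ℕ) + (m - 1 - (i0 : ℕ)) < m := by omega
      have h1 := chain _ hk
      have h2 := (x.P ⟨(i0 : ℕ) + (m - 1 - (i0 : ℕ)), hk⟩ c).isLt
      omega
    have hposn : 0 < (x.P i0 c : ℕ) := by
      have := Fin.lt_def.1 hpos
      simpa using this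
    have hi0pos : 0 < (i0 : ℕ) := by omega
    set r : Fin m := ⟨(i0 : ℕ) - 1, by omega⟩ with hrdef
    have hrval : (r : ℕ) + 1 = (i0 : ℕ) := by simp [hrdef]; omega
    have hretage : c + 1 ≤ x.eta r := by
      by_contra hh
      push_neg at hh
      have := hmin r (by omega)
      rw [Fin.le_def] at this
      simp [hrdef] at this
      omega
    have hrle : x.eta r ≤ c + 1 := by
      by_contra hgt
      push_neg at hgt
      rcases lt_or_ge (c + 1) ℓ with hcl | hcl
      · have hd := hdots (c + 1) (by omega) hcl
        have htop1 : topRow? m x.eta (c + 1) = some i0 := by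
          rw [topRow_some_iff]
          refine ⟨by omega, ?_⟩
          intro i hi
          by_contra hlt
          push_neg at hlt
          have hir : i ≤ r := by
            rw [Fin.le_def]
            have := Fin.lt_def.1 hlt
            simp [hrdef]
            omega
          have := x.eta_anti i r hir
          omega
        have hp0 : x.P i0 (c + 1) = 0 := by
          by_contra hne
          exact hd.1 (Or.inr ⟨i0, htop1, lt_of_le_of_ne (Fin.zero_le _) (Ne.symm hne)⟩)
        have hrow := x.hP.1 i0 c h0 hcl
        rw [hp0] at hrow
        have := Fin.le_def.1 hrow
        simp at this
        omega
      · have := x.eta_le r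
        have := hμl r
        omega
    refine ⟨r, by omega, ?_, ?_⟩
    · intro i hi
      have hii : i0 ≤ i := by
        rw [Fin.le_def]
        have := Fin.lt_def.1 hi
        simp [hrdef] at this
        omega
      exact le_trans (x.eta_anti i0 i hii) h0
    · intro h
      have he : (⟨(r : ℕ) + 1, h⟩ : Fin m) = i0 := by ext; simp [hrdef]; omega
      rw [he]
      exact ne_of_gt hpos

lemma q_nonzero (hμa : ∀ i j : Fin m, i ≤ j → μ j ≤ μ i) (hμl : ∀ i, μ i ≤ ℓ)
    (x : KElt m n ℓ μ X) (c : ℕ) (r : Fin m) (hr : x.eta r = c + 1)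
    (hdots : ∀ c', c < c' → c' < ℓ → dotAt m n ℓ x c')
    (hμr : c + 1 < μ r) : x.Q r (c + 1) ≠ 0 := by
  have hcl : c + 1 < ℓ := lt_of_lt_of_le hμr (hμl r)
  have hd := hdots (c + 1) (by omega) hcl
  obtain ⟨i0, htop, h0, hmin⟩ := topRow_spec (eta := x.eta) (c := c + 1) (i := r) (by omega)
  have hi0r : i0 ≤ r := hmin r (by omega)
  have hp0 : x.P i0 (c + 1) = 0 := by
    by_contra hne
    exact hd.1 (Or.inr ⟨i0, htop, lt_of_le_of_ne (Fin.zero_le _) (Ne.symm hne)⟩)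
  have hμi0 : c + 1 < μ i0 := lt_of_lt_of_le hμr (hμa i0 r hi0r)
  have hq0 : x.Q i0 (c + 1) ≠ 0 := fun h => hd.2 ⟨i0, htop, hp0, hμi0, h⟩
  have hrm : (r : ℕ) < m := r.isLt
  have chain : ∀ k (hk : (i0 : ℕ) + k ≤ (r : ℕ)),
      x.Q i0 (c + 1) ≤ x.Q ⟨(i0 : ℕ) + k, by omega⟩ (c + 1) := by
    intro k
    induction k with
    | zero =>
      intro hk
      have he : (⟨(i0 : ℕ) + 0, by omega⟩ : Fin m) = i0 := by ext; simp
      rw [he]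
    | succ k ih =>
      intro hk
      have hk' : (i0 : ℕ) + k ≤ (r : ℕ) := by omega
      have h1 := ih hk'
      have hik : (i0 : ℕ) + k < m := by omega
      have hek : x.eta (⟨(i0 : ℕ) + k, hik⟩ : Fin m) ≤ c + 1 := by
        refine le_trans (x.eta_anti i0 _ ?_) h0
        rw [Fin.le_def]; simp
      have hμk : c + 1 < μ (⟨(i0 : ℕ) + k + 1, by omega⟩ : Fin m) := by
        refine lt_of_lt_of_le hμr (hμa _ r ?_)
        rw [Fin.le_def]; simp; omega
      have hstep := x.hQ.2.1 ⟨(i0 : ℕ) + k, hik⟩ (by simp; omega) (c + 1) hek hμk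
      have he : (⟨((⟨(i0 : ℕ) + k, hik⟩ : Fin m) : ℕ) + 1, by simp; omega⟩ : Fin m)
          = ⟨(i0 : ℕ) + (k + 1), by omega⟩ := by ext; simp; omega
      rw [he] at hstep
      exact le_trans h1 hstep
  have hfin := chain ((r : ℕ) - (i0 : ℕ)) (by have := Fin.le_def.1 hi0r; omega)
  have he : (⟨(i0 : ℕ) + ((r : ℕ) - (i0 : ℕ)), by have := Fin.le_def.1 hi0r; omega⟩ : Fin m) = r := by
    ext; simp; have := Fin.le_def.1 hi0r; omega
  rw [he] at hfin
  intro hq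
  rw [hq] at hfin
  exact hq0 (le_antisymm hfin (Fin.zero_le _))
lemma f_exists (hμa : ∀ i j : Fin m, i ≤ j → μ j ≤ μ i) (hμl : ∀ i, μ i ≤ ℓ)
    (x : KElt m n ℓ μ X) (c : ℕ) (hc : c < ℓ) (hplus : plusAt m n ℓ x c)
    (hdots : ∀ c', c < c' → c' < ℓ → dotAt m n ℓ x c') : ∃ y, FRel m n ℓ x y := by
  obtain ⟨r, hr, hmax, hnext⟩ := exists_corner hμl x c hc hplus hdots
  obtain ⟨y, hyeta, hyP, hyQ, hyv⟩ := fStep x c hc r hr hmax hnext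
    (fun hμr => q_nonzero hμa hμl x c r hr hdots hμr)
  refine ⟨y, hyv, c, hc, hplus, hdots, r, hr, hyeta, ?_, ?_, ?_, ?_⟩
  · rw [hyP]; exact if_pos ⟨rfl, rfl⟩
  · intro i j hij; rw [hyP]; exact if_neg hij
  · rw [hyQ]; exact if_pos ⟨rfl, rfl⟩
  · intro i j hij; rw [hyQ]; exact if_neg hij

lemma e_exists (x : KElt m n ℓ μ X) (c : ℕ) (hc : c < ℓ) (hminus : minusAt m n ℓ x c)
    (hdots : ∀ c', c < c' → c' < ℓ → dotAt m n ℓ x c') : ∃ y, ERel m n ℓ x y := by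
  obtain ⟨i0, htop, hp0, hμ0, hq0⟩ := hminus
  obtain ⟨h0, hmin⟩ := topRow_some_iff.1 htop
  have heta0 : x.eta i0 = c := by
    by_contra hne
    have hlt : x.eta i0 < c := lt_of_le_of_ne h0 hne
    have hrow := x.hQ.1 i0 (c - 1) (by omega) (by omega)
    rw [show c - 1 + 1 = c by omega, hq0] at hrow
    exact absurd hrow (not_lt.2 (Fin.zero_le _))
  have hanti : ∀ i j : Fin m, i ≤ j → Function.update x.eta i0 (c + 1) j ≤
      Function.update x.eta i0 (c + 1) i := by
    intro i j hij
    rcases eq_or_ne i i0 with rfl | hi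
    · rcases eq_or_ne j i with rfl | hj
      · exact le_refl _
      · rw [Function.update_self, Function.update_of_ne hj]
        have := x.eta_anti i j hij
        omega
    · rcases eq_or_ne j i0 with rfl | hj
      · rw [Function.update_self, Function.update_of_ne hi]
        by_contra hh
        push_neg at hh
        have := hmin i (by omega)
        have h1 := Fin.le_def.1 this
        have h2 := Fin.le_def.1 hij
        have : i = j := Fin.ext (by omega)
        exact hi this
      · rw [Function.update_of_ne hi, Function.update_of_ne hj]
        exact x.eta_anti i j hij
  have hloge : ∀ i, x.eta i ≤ Function.update x.eta i0 (c + 1) i := by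
    intro i
    rcases eq_or_ne i i0 with rfl | hi
    · rw [Function.update_self]; omega
    · rw [Function.update_of_ne hi]
  refine ⟨⟨Function.update x.eta i0 (c + 1), hanti, ?_, x.P, x.Q, ⟨?_, ?_, ?_⟩,
      ⟨?_, ?_, ?_⟩, x.v⟩, rfl, c, hc, ⟨i0, htop, hp0, hμ0, hq0⟩, hdots, i0, htop, heta0,
      hp0, hq0, rfl, fun _ _ _ => rfl, fun _ _ _ => rfl⟩
  · intro i
    rcases eq_or_ne i i0 with rfl | hi
    · rw [Function.update_self]; omega
    · rw [Function.update_of_ne hi]; exact x.eta_le i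
  · exact fun i j h1 h2 => x.hP.1 i j (le_trans (hloge i) h1) h2
  · exact fun i h j h1 h2 => x.hP.2.1 i h j (le_trans (hloge i) h1) h2
  · intro i j hj
    rcases hj with hj | hj
    · rcases eq_or_ne i i0 with rfl | hi
      · rw [Function.update_self] at hj
        rcases eq_or_ne j c with rfl | hjc
        · exact hp0
        · exact x.hP.2.2 i j (Or.inl (by omega))
      · rw [Function.update_of_ne hi] at hj
        exact x.hP.2.2 i j (Or.inl hj)
    · exact x.hP.2.2 i j (Or.inr hj)
  · exact fun i j h1 h2 => x.hQ.1 i j (le_trans (hloge i) h1) h2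
  · exact fun i h j h1 h2 => x.hQ.2.1 i h j (le_trans (hloge i) h1) h2
  · intro i j hj
    rcases hj with hj | hj
    · rcases eq_or_ne i i0 with rfl | hi
      · rw [Function.update_self] at hj
        rcases eq_or_ne j c with rfl | hjc
        · exact hq0
        · exact x.hQ.2.2 i j (Or.inl (by omega))
      · rw [Function.update_of_ne hi] at hj
        exact x.hQ.2.2 i j (Or.inl hj)
    · exact x.hQ.2.2 i j (Or.inr hj)

lemma f_unique (x y y' : KElt m n ℓ μ X) (h : FRel m n ℓ x y) (h' : FRel m n ℓ x y') :
    y = y' := by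
  obtain ⟨hv, c, hc, hp, hd, r, hr, he, hP0, hPoff, hQ0, hQoff⟩ := h
  obtain ⟨hv', c', hc', hp', hd', r', hr', he', hP0', hPoff', hQ0', hQoff'⟩ := h'
  have hcc : c = c' := by
    rcases lt_trichotomy c c' with h1 | h1 | h1
    · exact absurd hp' (hd c' h1 hc').1
    · exact h1
    · exact absurd hp (hd' c h1 hc).1
  subst hcc
  have hrr : r = r' := by
    by_contra hne
    rcases lt_or_gt_of_ne hne with hlt | hlt
    · have hanti := y.eta_anti r r' (le_of_lt hlt)
      rw [he, Function.update_self, Function.update_of_ne (ne_of_gt hlt)] at hanti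
      omega
    · have hanti := y'.eta_anti r' r (le_of_lt hlt)
      rw [he', Function.update_self, Function.update_of_ne (ne_of_gt hlt)] at hanti
      omega
  subst hrr
  apply KElt.ext'
  · rw [he, he']
  · funext i j
    by_cases hij : i = r ∧ j = c
    · obtain ⟨rfl, rfl⟩ := hij; rw [hP0, hP0']
    · rw [hPoff i j hij, hPoff' i j hij]
  · funext i j
    by_cases hij : i = r ∧ j = c
    · obtain ⟨rfl, rfl⟩ := hij; rw [hQ0, hQ0']
    · rw [hQoff i j hij, hQoff' i j hij]
  · rw [hv, hv']

lemma e_unique (x y y' : KElt m n ℓ μ X) (h : ERel m n ℓ x y) (h' : ERel m n ℓ x y') :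
    y = y' := by
  obtain ⟨hv, c, hc, hm, hd, r, htop, hxr, hxP, hxQ, he, hPoff, hQoff⟩ := h
  obtain ⟨hv', c', hc', hm', hd', r', htop', hxr', hxP', hxQ', he', hPoff', hQoff'⟩ := h'
  have hcc : c = c' := by
    rcases lt_trichotomy c c' with h1 | h1 | h1
    · exact absurd hm' (hd c' h1 hc').2
    · exact h1
    · exact absurd hm (hd' c h1 hc).2
  subst hcc
  have hrr : r = r' := by
    rw [htop] at htop'
    exact Option.some.inj htop'
  subst hrr
  have hyr : y.eta r = c + 1 := by rw [he, Function.update_self]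
  have hyr' : y'.eta r = c + 1 := by rw [he', Function.update_self]
  apply KElt.ext'
  · rw [he, he']
  · funext i j
    by_cases hij : i = r ∧ j = c
    · obtain ⟨rfl, rfl⟩ := hij
      rw [y.hP.2.2 i j (Or.inl (by omega)), y'.hP.2.2 i j (Or.inl (by omega))]
    · rw [hPoff i j hij, hPoff' i j hij]
  · funext i j
    by_cases hij : i = r ∧ j = c
    · obtain ⟨rfl, rfl⟩ := hij
      rw [y.hQ.2.2 i j (Or.inl (by omega)), y'.hQ.2.2 i j (Or.inl (by omega))]
    · rw [hQoff i j hij, hQoff' i j hij]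
  · rw [hv, hv']
lemma frel_to_erel (x y : KElt m n ℓ μ X) (h : FRel m n ℓ x y) : ERel m n ℓ y x := by
  obtain ⟨hv, c, hc, hp, hd, r, hr, he, hP0, hPoff, hQ0, hQoff⟩ := h
  have hyr : y.eta r = c := by rw [he, Function.update_self]
  have hyother : ∀ i, i ≠ r → y.eta i = x.eta i := fun i hi => by
    rw [he, Function.update_of_ne hi]
  have htopy : topRow? m y.eta c = some r := by
    rw [topRow_some_iff]
    refine ⟨le_of_eq hyr, ?_⟩
    intro i hi
    by_contra hlt
    push_neg at hlt
    rw [hyother i (ne_of_lt hlt)] at hi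
    have := x.eta_anti i r (le_of_lt hlt)
    omega
  have hμr : c < μ r := by have := x.eta_le r; omega
  refine ⟨hv.symm, c, hc, ⟨r, htopy, hP0, hμr, hQ0⟩, ?_, r, htopy, hyr, hP0, hQ0,
      ?_, ?_, ?_⟩
  · intro c' h1 h2
    have htr : topRow? m x.eta c' = topRow? m y.eta c' := by
      unfold topRow?
      have hset : (Finset.univ.filter fun i : Fin m => x.eta i ≤ c') =
          (Finset.univ.filter fun i : Fin m => y.eta i ≤ c') := by
        ext i
        simp only [Finset.mem_filter, Finset.mem_univ, true_and]
        rcases eq_or_ne i r with rfl | hi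
        · rw [hyr, hr]; constructor <;> intro <;> omega
        · rw [hyother i hi]
      rw [hset]
    exact dotAt_congr htr
      (fun i => (hPoff i c' (fun hh => by omega)).symm)
      (fun i => (hQoff i c' (fun hh => by omega)).symm) (hd c' h1 h2)
  · funext i
    rcases eq_or_ne i r with rfl | hi
    · rw [Function.update_self, hr]
    · rw [Function.update_of_ne hi, hyother i hi]
  · exact fun i j hij => (hPoff i j hij).symm
  · exact fun i j hij => (hQoff i j hij).symm

lemma erel_to_frel (x y : KElt m n ℓ μ X) (h : ERel m n ℓ y x) : FRel m n ℓ x y := by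
  obtain ⟨hv, c, hc, hm, hd, r, htop, hyr, hyP0, hyQ0, hxe, hPoff, hQoff⟩ := h
  obtain ⟨-, hminy⟩ := topRow_some_iff.1 htop
  have hxr : x.eta r = c + 1 := by rw [hxe, Function.update_self]
  have hxother : ∀ i, i ≠ r → x.eta i = y.eta i := fun i hi => by
    rw [hxe, Function.update_of_ne hi]
  have hplus : plusAt m n ℓ x c := by
    by_cases hrm : (r : ℕ) + 1 < m
    · have hi1r : (⟨(r : ℕ) + 1, hrm⟩ : Fin m) ≠ r := by
        intro hh; have := congrArg Fin.val hh; simp at this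
      have hxi1 : x.eta ⟨(r : ℕ) + 1, hrm⟩ ≤ c := by
        rw [hxother _ hi1r]
        refine le_trans (y.eta_anti r _ ?_) (le_of_eq hyr)
        rw [Fin.le_def]; simp
      have htopx : topRow? m x.eta c = some ⟨(r : ℕ) + 1, hrm⟩ := by
        rw [topRow_some_iff]
        refine ⟨hxi1, ?_⟩
        intro i hi
        have hir : i ≠ r := by intro hh; subst hh; omega
        rw [hxother i hir] at hi
        have hri := Fin.le_def.1 (hminy i hi)
        have hne : (i : ℕ) ≠ (r : ℕ) := fun hh => hir (Fin.ext hh)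
        rw [Fin.le_def]
        simp
        omega
      refine Or.inr ⟨_, htopx, ?_⟩
      have hstep := y.hP.2.1 r hrm c (le_of_eq hyr) hc
      rw [hyP0] at hstep
      rw [hPoff _ c (fun hh => hi1r hh.1)]
      exact hstep
    · left
      rw [topRow_none_iff]
      intro i
      by_contra hle
      push_neg at hle
      have hir : i ≠ r := by intro hh; subst hh; omega
      rw [hxother i hir] at hle
      have h1 := Fin.le_def.1 (hminy i hle)
      have h2 := i.isLt
      have hne : (i : ℕ) ≠ (r : ℕ) := fun hh => hir (Fin.ext hh)
      omega
  refine ⟨hv.symm, c, hc, hplus, ?_, r, hxr, ?_, hyP0,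
      (fun i j hij => (hPoff i j hij).symm), hyQ0, (fun i j hij => (hQoff i j hij).symm)⟩
  · intro c' h1 h2
    have htr : topRow? m y.eta c' = topRow? m x.eta c' := by
      unfold topRow?
      have hset : (Finset.univ.filter fun i : Fin m => y.eta i ≤ c') =
          (Finset.univ.filter fun i : Fin m => x.eta i ≤ c') := by
        ext i
        simp only [Finset.mem_filter, Finset.mem_univ, true_and]
        rcases eq_or_ne i r with rfl | hi
        · rw [hyr, hxr]; constructor <;> intro <;> omega
        · rw [hxother i hi]
      rw [hset]
    exact dotAt_congr htr
      (fun i => (hPoff i c' (fun hh => by omega)).symm)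
      (fun i => (hQoff i c' (fun hh => by omega)).symm) (hd c' h1 h2)
  · funext i
    rcases eq_or_ne i r with rfl | hi
    · rw [Function.update_self, hyr]
    · rw [Function.update_of_ne hi, hxother i hi]
end Proofs

/-- the operators `ẽ₀` and `f̃₀` defined on
`𝒦 = ⨆_{η ⊆ μ} SST_𝔸((ℓ^m)/η) × SST_𝔹(μ/η) × X` by the signature rule map `𝒦` into
`𝒦 ∪ {0}` (whenever the scan succeeds the resulting pair of tableaux is again a valid
element of `𝒦`, and the result is unique), and they are mutually inverse where defined:
`f̃₀(x) = y ⟺ ẽ₀(y) = x`. -/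
theorem stmt19 (m n ℓ : ℕ) [NeZero m] [NeZero n] (hl : 0 < ℓ)
    (μ : Fin m → ℕ) (hμa : ∀ i j : Fin m, i ≤ j → μ j ≤ μ i) (hμl : ∀ i, μ i ≤ ℓ)
    (X : Type*) :
    (∀ (x : KElt m n ℓ μ X) (c : ℕ), c < ℓ → plusAt m n ℓ x c →
      (∀ c', c < c' → c' < ℓ → dotAt m n ℓ x c') → ∃ y, FRel m n ℓ x y) ∧
    (∀ (x : KElt m n ℓ μ X) (c : ℕ), c < ℓ → minusAt m n ℓ x c →
      (∀ c', c < c' → c' < ℓ → dotAt m n ℓ x c') → ∃ y, ERel m n ℓ x y) ∧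
    (∀ x y y' : KElt m n ℓ μ X, FRel m n ℓ x y → FRel m n ℓ x y' → y = y') ∧
    (∀ x y y' : KElt m n ℓ μ X, ERel m n ℓ x y → ERel m n ℓ x y' → y = y') ∧
    (∀ x y : KElt m n ℓ μ X, FRel m n ℓ x y ↔ ERel m n ℓ y x) := by
  exact ⟨fun x c hc hp hd => f_exists hμa hμl x c hc hp hd,
    fun x c hc hm hd => e_exists x c hc hm hd,
    f_unique, e_unique,
    fun x y => ⟨frel_to_erel x y, erel_to_frel x y⟩⟩
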